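/- (Remark 2.5, symmetry of the local Delaunay condition) Let n ≥ 1 and let v : Fin (n+2) → ℝⁿ be points such that the tuple (v(0), …, v(n)) is affinely independent with associated n-simplex σ, the tuple (v(1), …, v(n+1)) is affinely independent with associated n-simplex σ', and v(0) and v(n+1) lie strictly on opposite sides of the affine hyperplane spanned by v(1), …, v(n). Then v(0) lies in the open ball bounded by the circumsphere of σ' if and only if v(n+1) lies in the open ball bounded by the circumsphere of σ; that is, dist(v(0), circumcenter(σ')) < circumradius(σ') if and only if dist(v(n+1), circumcenter(σ)) < circumradius(σ). -/

import Mathlib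

/-- Remark 2.5: if two `n`-simplices `σ = [v 0, …, v n]` and `σ' = [v 1, …, v (n+1)]` in
`ℝⁿ` share the common `(n-1)`-face `[v 1, …, v n]` and the opposite vertices `v 0`,
`v (n+1)` lie strictly on opposite sides of the hyperplane spanned by that face, then
`v 0` lies inside the circumsphere of `σ'` iff `v (n+1)` lies inside the circumsphere
of `σ`. -/
theorem delaunay_condition_symmetric {n : ℕ} (hn : 1 ≤ n)
    (v : Fin (n + 2) → EuclideanSpace ℝ (Fin n))
    (hσ : AffineIndependent ℝ (fun i : Fin (n + 1) => v i.castSucc))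
    (hσ' : AffineIndependent ℝ (fun i : Fin (n + 1) => v i.succ))
    (hopp : (affineSpan ℝ (Set.range fun i : Fin n => v i.succ.castSucc)).SOppSide
      (v 0) (v (Fin.last (n + 1)))) :
    (dist (v 0) (Affine.Simplex.circumcenter ⟨fun i : Fin (n + 1) => v i.succ, hσ'⟩) <
        Affine.Simplex.circumradius ⟨fun i : Fin (n + 1) => v i.succ, hσ'⟩) ↔
    (dist (v (Fin.last (n + 1)))
        (Affine.Simplex.circumcenter ⟨fun i : Fin (n + 1) => v i.castSucc, hσ⟩) <
      Affine.Simplex.circumradius ⟨fun i : Fin (n + 1) => v i.castSucc, hσ⟩) := by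
  set T : Affine.Simplex ℝ (EuclideanSpace ℝ (Fin n)) n := ⟨fun i : Fin (n + 1) => v i.castSucc, hσ⟩ with hT
  set T' : Affine.Simplex ℝ (EuclideanSpace ℝ (Fin n)) n := ⟨fun i : Fin (n + 1) => v i.succ, hσ'⟩ with hT'
  set c := T.circumcenter
  set c' := T'.circumcenter
  set r := T.circumradius
  set r' := T'.circumradius
  show dist (v 0) c' < r' ↔ dist (v (Fin.last (n+1))) c < r
  -- the affine map whose zero set contains the common face span
  have L : EuclideanSpace ℝ (Fin n) →ₗ[ℝ] ℝ :=
    { toFun := fun x => 2 * (inner ℝ x (c' - c) : ℝ)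
      map_add' := by intro x y; simp [inner_add_left]; ring
      map_smul' := by intro m x; simp [inner_smul_left]; ring }
  set f : EuclideanSpace ℝ (Fin n) → ℝ := fun x => ‖x - c‖ ^ 2 - r ^ 2 - ‖x - c'‖ ^ 2 + r' ^ 2 with hf
  have hL : ∀ x : EuclideanSpace ℝ (Fin n), f x = 2 * (inner ℝ x (c' - c) : ℝ) + f 0 := by
    intro x
    simp only [hf, norm_sub_sq_real, inner_sub_right, zero_sub, norm_neg,
      inner_zero_left]
    ring
  let h : EuclideanSpace ℝ (Fin n) →ᵃ[ℝ] ℝ := AffineMap.mk' f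
    { toFun := fun x => 2 * (inner ℝ x (c' - c) : ℝ)
      map_add' := by intro x y; simp [inner_add_left]; ring
      map_smul' := by intro m x; simp [inner_smul_left]; ring } 0
    (by intro p; simpa using hL p)
  have hface : ∀ i : Fin n, h (v i.succ.castSucc) = 0 := by
    intro i
    have h1 : dist (v i.succ.castSucc) c = r := by
      have := T.dist_circumcenter_eq_circumradius i.succ
      simpa [hT] using this
    have h2 : dist (v i.succ.castSucc) c' = r' := by
      have := T'.dist_circumcenter_eq_circumradius i.castSucc
      simpa [hT'] using this
    show f _ = 0
    rw [hf]
    simp only [← dist_eq_norm]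
    rw [h1, h2]; ring
  have hspan : ∀ p ∈ affineSpan ℝ (Set.range fun i : Fin n => v i.succ.castSucc),
      h p = 0 := by
    intro p hp
    have hsub : Set.range (fun i : Fin n => v i.succ.castSucc) ⊆
        {x : EuclideanSpace ℝ (Fin n) | h x = 0} := by
      rintro x ⟨i, rfl⟩; exact hface i
    have hzero : ∀ q ∈ affineSpan ℝ (Set.range fun i : Fin n => v i.succ.castSucc),
        h q ∈ ({0} : Set ℝ) := by
      intro q hq
      have : affineSpan ℝ (Set.range fun i : Fin n => v i.succ.castSucc) ≤
          AffineSubspace.comap h (AffineSubspace.mk' (0:ℝ) ⊥) := by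
        apply affineSpan_le.2
        rintro x ⟨i, rfl⟩
        simpa [AffineSubspace.mem_comap, AffineSubspace.mem_mk'] using hface i
      have := this hq
      simpa [AffineSubspace.mem_comap, AffineSubspace.mem_mk'] using this
    simpa using hzero p hp
  obtain ⟨p, hp, hsbtw⟩ := hopp.exists_sbtw
  obtain ⟨t, ht, hpt⟩ := hsbtw.mem_image_Ioo
  have hp0 : h p = 0 := hspan p hp
  have hcomb : t * (h (v (Fin.last (n+1))) - h (v 0)) + h (v 0) = 0 := by
    have := h.apply_lineMap (v 0) (v (Fin.last (n+1))) t
    rw [hpt.symm] at hp0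
    rw [this] at hp0
    simpa [AffineMap.lineMap_apply_module'] using hp0
  -- compute h at the two apex vertices
  have hv0c : dist (v 0) c = r := by
    have := T.dist_circumcenter_eq_circumradius 0
    simpa [hT] using this
  have hvNc' : dist (v (Fin.last (n+1))) c' = r' := by
    have := T'.dist_circumcenter_eq_circumradius (Fin.last n)
    simpa [hT', Fin.succ_last] using this
  have hhv0 : h (v 0) = r' ^ 2 - dist (v 0) c' ^ 2 := by
    show f _ = _
    rw [hf]; simp only [← dist_eq_norm]; rw [hv0c]; ring
  have hhvN : h (v (Fin.last (n+1))) = dist (v (Fin.last (n+1))) c ^ 2 - r ^ 2 := by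
    show f _ = _
    rw [hf]; simp only [← dist_eq_norm]; rw [hvNc']; ring
  rw [hhv0, hhvN] at hcomb
  have d1 : (0:ℝ) ≤ dist (v 0) c' := dist_nonneg
  have d2 : (0:ℝ) ≤ dist (v (Fin.last (n+1))) c := dist_nonneg
  have r1 : (0:ℝ) ≤ r := T.circumradius_nonneg
  have r2 : (0:ℝ) ≤ r' := T'.circumradius_nonneg
  obtain ⟨ht0, ht1⟩ := ht
  clear hface hspan hp hsbtw hpt hp0 hopp hn hhv0 hhvN hv0c hvNc'
  clear h hL f L hf hT hT'
  clear_value c c' r r' T T'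
  set d := dist (v 0) c' with hd
  set D := dist (v (Fin.last (n+1))) c with hD
  clear_value d D
  clear hd hD hσ hσ' T T' v p c c'
  constructor
  · intro hlt
    by_contra hge
    push_neg at hge
    have h1 : 0 < r' ^ 2 - d ^ 2 := by nlinarith
    have h2 : 0 ≤ D ^ 2 - r ^ 2 := by nlinarith
    have h3 : 0 ≤ t * (D ^ 2 - r ^ 2) := mul_nonneg ht0.le h2
    have h4 : 0 < (1 - t) * (r' ^ 2 - d ^ 2) := mul_pos (by linarith) h1
    nlinarith [hcomb]
  · intro hlt
    by_contra hge
    push_neg at hge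
    have h1 : 0 < r ^ 2 - D ^ 2 := by nlinarith
    have h2 : 0 ≤ d ^ 2 - r' ^ 2 := by nlinarith
    have h3 : 0 < t * (r ^ 2 - D ^ 2) := mul_pos ht0 h1
    have h4 : 0 ≤ (1 - t) * (d ^ 2 - r' ^ 2) := mul_nonneg (by linarith) h2
    nlinarith [hcomb]
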